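/- Define u : ℂ³ → ℝ by u(x₁, x₂, y) = (s + √(s² − |y|⁶))^{1/3} + (s − √(s² − |y|⁶))^{1/3}, where s = |x₁|² + |x₂|² and real (nonnegative) square roots and cube roots are used. Fix ζ ∈ ℂ with ζ³ = −1 and define Φ : ℂ² → ℂ³ by Φ(z₁, z₂) = ((z₁³ + z₂³)/2, (z₁³ − z₂³)/(2√−1), ζ z₁ z₂). Then the pullback of u under Φ is the flat Kähler potential of ℂ²: for all (z₁, z₂) ∈ ℂ², u(Φ(z₁, z₂)) = |z₁|² + |z₂|². -/

import Mathlib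

/-- The explicit potential `r²` on the A₂ singularity in ambient coordinates. -/
noncomputable def A2potential (x₁ x₂ y : ℂ) : ℝ :=
  (‖x₁‖^2 + ‖x₂‖^2
      + Real.sqrt ((‖x₁‖^2 + ‖x₂‖^2)^2 - ‖y‖^6))
    ^ ((1:ℝ)/3)
  + (‖x₁‖^2 + ‖x₂‖^2
      - Real.sqrt ((‖x₁‖^2 + ‖x₂‖^2)^2 - ‖y‖^6))
    ^ ((1:ℝ)/3)

lemma cube_rt (A : ℝ) (hA : 0 ≤ A) : (A^3 : ℝ) ^ ((1:ℝ)/3) = A := by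
  rw [← Real.rpow_natCast A 3, ← Real.rpow_mul hA]
  norm_num

lemma key_le (A B : ℝ) (hA : 0 ≤ A) (hB : 0 ≤ B) (hBA : B ≤ A) :
    ((A^3+B^3)/2 + Real.sqrt (((A^3+B^3)/2)^2 - A^3*B^3)) ^ ((1:ℝ)/3)
    + ((A^3+B^3)/2 - Real.sqrt (((A^3+B^3)/2)^2 - A^3*B^3)) ^ ((1:ℝ)/3) = A + B := by
  have h1 : ((A^3+B^3)/2)^2 - A^3*B^3 = ((A^3-B^3)/2)^2 := by ring
  have h3 : B^3 ≤ A^3 := pow_le_pow_left₀ hB hBA 3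
  have h2 : Real.sqrt (((A^3+B^3)/2)^2 - A^3*B^3) = (A^3-B^3)/2 := by
    rw [h1, Real.sqrt_sq_eq_abs, abs_of_nonneg (by linarith)]
  rw [h2]
  have e1 : (A^3+B^3)/2 + (A^3-B^3)/2 = A^3 := by ring
  have e2 : (A^3+B^3)/2 - (A^3-B^3)/2 = B^3 := by ring
  rw [e1, e2, cube_rt A hA, cube_rt B hB]

lemma key (A B : ℝ) (hA : 0 ≤ A) (hB : 0 ≤ B) :
    ((A^3+B^3)/2 + Real.sqrt (((A^3+B^3)/2)^2 - A^3*B^3)) ^ ((1:ℝ)/3)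
    + ((A^3+B^3)/2 - Real.sqrt (((A^3+B^3)/2)^2 - A^3*B^3)) ^ ((1:ℝ)/3) = A + B := by
  rcases le_total B A with h | h
  · exact key_le A B hA hB h
  · have := key_le B A hB hA h
    rw [show B^3+A^3 = A^3+B^3 by ring, show B^3*A^3 = A^3*B^3 by ring] at this
    linarith [this]

/-- The pullback of the potential `u = r²` of the A₂ cone metric under
`Φ(z₁,z₂) = ((z₁³+z₂³)/2, (z₁³−z₂³)/(2i), ζz₁z₂)` (`ζ³ = -1`) is the flat Kähler
potential `|z₁|² + |z₂|²` of `ℂ²`. -/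
theorem stmt_7 (ζ : ℂ) (hζ : ζ^3 = -1) (z₁ z₂ : ℂ) :
    A2potential ((z₁^3 + z₂^3)/2) ((z₁^3 - z₂^3)/(2*Complex.I)) (ζ*z₁*z₂)
      = ‖z₁‖^2 + ‖z₂‖^2 := by
  set A := ‖z₁‖^2 with hAdef
  set B := ‖z₂‖^2 with hBdef
  have hA : 0 ≤ A := sq_nonneg _
  have hB : 0 ≤ B := sq_nonneg _
  have habsζ : ‖ζ‖ = 1 := by
    have : ‖ζ‖ ^ 3 = 1 := by
      rw [← norm_pow, hζ]; simp
    nlinarith [norm_nonneg ζ, sq_nonneg (‖ζ‖ - 1), sq_nonneg (‖ζ‖ + 1)]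
  have hs : ‖(z₁^3 + z₂^3)/2‖^2 + ‖(z₁^3 - z₂^3)/(2*Complex.I)‖^2
      = (A^3 + B^3)/2 := by
    rw [norm_div, norm_div, div_pow, div_pow]
    simp only [norm_mul, Complex.norm_I, mul_one, Complex.norm_ofNat]
    rw [Complex.sq_norm, Complex.sq_norm, Complex.normSq_add, Complex.normSq_sub]
    have : Complex.normSq (z₁^3) + Complex.normSq (z₂^3) = A^3 + B^3 := by
      rw [← Complex.sq_norm, ← Complex.sq_norm, norm_pow, norm_pow]
      ring
    nlinarith [this]
  have hy : ‖ζ*z₁*z₂‖^6 = A^3 * B^3 := by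
    simp only [norm_mul, habsζ, one_mul]
    ring
  rw [A2potential, hs, hy]
  exact key A B hA hB
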